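/- Let (Λ, ≤) be a partially ordered set in which every element has only finitely many predecessors and every closed interval {ν : μ ≤ ν ≤ λ} is finite. Then every finitely generated ideal Γ of Λ admits a decreasing chain of finitely generated ideals Γ = Γ_0 ⊇ Γ_1 ⊇ Γ_2 ⊇ … such that Γ \ Γ_k is a finite set for every k ≥ 0 and ⋂_{k ≥ 0} Γ_k = ∅. -/

import Mathlib

/-- A subset of a poset is a finitely generated ideal if it is a finite union of
principal ideals `(λ] = {μ : μ ≤ λ}`. -/
def IsFGIdeal {Λ : Type*} [PartialOrder Λ] (Γ : Set Λ) : Prop :=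
  ∃ s : Finset Λ, Γ = {μ : Λ | ∃ x ∈ s, μ ≤ x}

section Aux

variable {Λ : Type*} [PartialOrder Λ]

/-- The set of predecessors of elements of `t`. -/
noncomputable def predStep (hpred : ∀ lam : Λ, {μ : Λ | μ ⋖ lam}.Finite)
    (t : Finset Λ) : Finset Λ :=
  (Set.Finite.biUnion t.finite_toSet (fun x _ => hpred x)).toFinset

lemma mem_predStep (hpred : ∀ lam : Λ, {μ : Λ | μ ⋖ lam}.Finite)
    {t : Finset Λ} {x : Λ} : x ∈ predStep hpred t ↔ ∃ y ∈ t, x ⋖ y := by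
  simp [predStep, Set.Finite.mem_toFinset]

/-- Iterated predecessor sets. -/
noncomputable def genSeq (hpred : ∀ lam : Λ, {μ : Λ | μ ⋖ lam}.Finite)
    (s : Finset Λ) : ℕ → Finset Λ
  | 0 => s
  | k + 1 => predStep hpred (genSeq hpred s k)

lemma exists_covby (hint : ∀ μ lam : Λ, {ν : Λ | μ ≤ ν ∧ ν ≤ lam}.Finite)
    {ν x : Λ} (h : ν < x) : ∃ μ, ν ≤ μ ∧ μ ⋖ x := by
  have hfin : {τ : Λ | (ν ≤ τ ∧ τ < x)}.Finite :=
    (hint ν x).subset fun τ ⟨h1, h2⟩ => ⟨h1, h2.le⟩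
  obtain ⟨μ, hμ, hmax⟩ := hfin.exists_maximal ⟨ν, le_refl ν, h⟩
  refine ⟨μ, hμ.1, hμ.2, fun c hc1 hc2 => ?_⟩
  have : μ = c := le_antisymm hc1.le (hmax ⟨hμ.1.trans hc1.le, hc2⟩ hc1.le)
  exact absurd this hc1.ne

lemma genSeq_card (hpred : ∀ lam : Λ, {μ : Λ | μ ⋖ lam}.Finite)
    (hint : ∀ μ lam : Λ, {ν : Λ | μ ≤ ν ∧ ν ≤ lam}.Finite)
    (s : Finset Λ) :
    ∀ k, ∀ x ∈ genSeq hpred s k,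
      ∃ y ∈ s, x ≤ y ∧ k + 1 ≤ (hint x y).toFinset.card := by
  classical
  intro k
  induction k with
  | zero =>
      intro x hx
      refine ⟨x, hx, le_refl x, ?_⟩
      have : x ∈ (hint x x).toFinset := by
        simp [Set.Finite.mem_toFinset]
      exact Finset.card_pos.mpr ⟨x, this⟩
  | succ k ih =>
      intro x hx
      obtain ⟨y', hy', hcov⟩ := (mem_predStep hpred).mp hx
      obtain ⟨y, hy, hle, hcard⟩ := ih y' hy'
      refine ⟨y, hy, (hcov.le).trans hle, ?_⟩
      have hsub : insert x (hint y' y).toFinset ⊆ (hint x y).toFinset := by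
        intro τ hτ
        rcases Finset.mem_insert.mp hτ with rfl | hτ
        · simp [Set.Finite.mem_toFinset]
          exact hcov.lt.le.trans hle
        · simp only [Set.Finite.mem_toFinset, Set.mem_setOf_eq] at hτ ⊢
          exact ⟨(hcov.lt.le).trans hτ.1, hτ.2⟩
      have hx_not : x ∉ (hint y' y).toFinset := by
        simp only [Set.Finite.mem_toFinset, Set.mem_setOf_eq]
        intro ⟨h1, _⟩
        exact absurd h1 (not_le_of_gt hcov.lt)
      calc k + 1 + 1 ≤ (hint y' y).toFinset.card + 1 := by omega
        _ = (insert x (hint y' y).toFinset).card := (Finset.card_insert_of_notMem hx_not).symm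
        _ ≤ (hint x y).toFinset.card := Finset.card_le_card hsub

end Aux

/-- Let `Λ` be a poset in which every element has only finitely many predecessors
(elements covered by it) and every closed interval is finite. Then every finitely
generated ideal `Γ` admits a decreasing chain of finitely generated ideals
`Γ = Γ_0 ⊇ Γ_1 ⊇ ⋯` with `Γ \ Γ_k` finite for all `k` and `⋂ Γ_k = ∅`. -/
theorem fgIdeal_exhausting_chain {Λ : Type*} [PartialOrder Λ]
    (hpred : ∀ lam : Λ, {μ : Λ | μ ⋖ lam}.Finite)
    (hint : ∀ μ lam : Λ, {ν : Λ | μ ≤ ν ∧ ν ≤ lam}.Finite)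
    (Γ : Set Λ) (hΓ : IsFGIdeal Γ) :
    ∃ C : ℕ → Set Λ,
      C 0 = Γ ∧
      (∀ k, IsFGIdeal (C k)) ∧
      (∀ k, C (k + 1) ⊆ C k) ∧
      (∀ k, (Γ \ C k).Finite) ∧
      (⋂ k, C k) = ∅ := by
  obtain ⟨s, hs⟩ := hΓ
  set C : ℕ → Set Λ := fun k => {μ : Λ | ∃ x ∈ genSeq hpred s k, μ ≤ x} with hC
  have hC0 : C 0 = Γ := by rw [hs]; rfl
  have hmono : ∀ k, C (k + 1) ⊆ C k := by
    intro k ν ⟨x, hx, hνx⟩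
    obtain ⟨y, hy, hcov⟩ := (mem_predStep hpred).mp hx
    exact ⟨y, hy, hνx.trans hcov.lt.le⟩
  refine ⟨C, hC0, fun k => ⟨genSeq hpred s k, rfl⟩, hmono, ?_, ?_⟩
  · intro k
    induction k with
    | zero => rw [hC0]; simp
    | succ k ih =>
        have hsub : Γ \ C (k + 1) ⊆ (Γ \ C k) ∪ ↑(genSeq hpred s k) := by
          intro ν ⟨hν, hν'⟩
          by_cases h : ν ∈ C k
          · obtain ⟨x, hx, hle⟩ := h
            rcases hle.lt_or_eq with hlt | rfl
            · obtain ⟨μ, hνμ, hcov⟩ := exists_covby hint hlt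
              exact absurd ⟨μ, (mem_predStep hpred).mpr ⟨x, hx, hcov⟩, hνμ⟩ hν'
            · exact Or.inr hx
          · exact Or.inl ⟨hν, h⟩
        exact (ih.union (genSeq hpred s k).finite_toSet).subset hsub
  · ext ν
    simp only [Set.mem_iInter, Set.mem_empty_iff_false, iff_false]
    intro hν
    set M := s.sup fun y => (hint ν y).toFinset.card with hM
    obtain ⟨x, hx, hνx⟩ := hν M
    obtain ⟨y, hy, hxy, hcard⟩ := genSeq_card hpred hint s M x hx
    have hsub : (hint x y).toFinset ⊆ (hint ν y).toFinset := by
      intro τ hτ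
      simp only [Set.Finite.mem_toFinset, Set.mem_setOf_eq] at hτ ⊢
      exact ⟨hνx.trans hτ.1, hτ.2⟩
    have h1 : M + 1 ≤ (hint ν y).toFinset.card :=
      hcard.trans (Finset.card_le_card hsub)
    have h2 : (hint ν y).toFinset.card ≤ M := Finset.le_sup (f := fun y => (hint ν y).toFinset.card) hy
    omega
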